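/- Let s_n = |SEP(n)| denote the number of separable permutations of [n]. Then for every n ≥ 2, s_n = s_1·s_{n−1} + (1/2)∑_{j=2}^{n−1} s_j·s_{n−j} + (1/2)s_n (equivalently, s_n = 2·s_{n−1} + ∑_{j=2}^{n−1} s_j·s_{n−j}), with s_1 = 1. -/

import Mathlib

open Finset Filter Real
open scoped Classical

/-- `σ` contains the pattern `τ` (a permutation of `Fin k` given as a function). -/
def ContainsPattern {n k : ℕ} (σ : Equiv.Perm (Fin n)) (τ : Fin k → Fin k) : Prop :=
  ∃ f : Fin k → Fin n, StrictMono f ∧ ∀ a b : Fin k, τ a < τ b ↔ σ (f a) < σ (f b)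

/-- A permutation is separable iff it avoids the patterns 2413 and 3142. -/
def Separable {n : ℕ} (σ : Equiv.Perm (Fin n)) : Prop :=
  ¬ ContainsPattern σ (![1, 3, 0, 2] : Fin 4 → Fin 4) ∧
  ¬ ContainsPattern σ (![2, 0, 3, 1] : Fin 4 → Fin 4)

/-- The set of separable permutations of `[n]`. -/
noncomputable def SEP (n : ℕ) : Finset (Equiv.Perm (Fin n)) :=
  Finset.univ.filter fun σ => Separable σ

/-- `IsAltSeq σ s l` : `l` is a strictly increasing list of indices along which the values of `σ`
alternate, starting with an ascent if `s = true` and starting with a descent if `s = false`. -/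
def IsAltSeq {n : ℕ} (σ : Equiv.Perm (Fin n)) (s : Bool) (l : List (Fin n)) : Prop :=
  l.Chain' (· < ·) ∧
  ∀ j : ℕ, ∀ hj : j + 1 < l.length,
    if decide (j % 2 = 0) = s then
      σ (l.get ⟨j, Nat.lt_of_succ_lt hj⟩) < σ (l.get ⟨j + 1, hj⟩)
    else
      σ (l.get ⟨j + 1, hj⟩) < σ (l.get ⟨j, Nat.lt_of_succ_lt hj⟩)

/-- The length of the longest alternating subsequence of `σ` of type `(s, e)`, where
`true` stands for ascent and `false` for descent.  An alternating subsequence starting with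
an ascent ends with a descent iff its length is odd (and similarly in the other cases), so the
type is encoded by the parity constraint; a singleton counts as a subsequence of types
`(+,-)` and `(-,+)` but not of types `(+,+)` and `(-,-)`. -/
noncomputable def altTypeLen {n : ℕ} (σ : Equiv.Perm (Fin n)) (s e : Bool) : ℕ :=
  sSup {k | ∃ l : List (Fin n), IsAltSeq σ s l ∧ l.length = k ∧
    k % 2 = (if s = e then 0 else 1)}

/-- The length `Aₙ(σ)` of the longest alternating subsequence of `σ`. -/
noncomputable def altLen {n : ℕ} (σ : Equiv.Perm (Fin n)) : ℕ :=
  sSup {k | ∃ l : List (Fin n), (IsAltSeq σ true l ∨ IsAltSeq σ false l) ∧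
    l.length = k ∧ 1 ≤ k}

/-- Expectation with respect to the uniform probability measure on `SEP n`. -/
noncomputable def sepExp (n : ℕ) (f : Equiv.Perm (Fin n) → ℝ) : ℝ :=
  (∑ σ ∈ SEP n, f σ) / (SEP n).card

/-- Variance with respect to the uniform probability measure on `SEP n`. -/
noncomputable def sepVar (n : ℕ) (f : Equiv.Perm (Fin n) → ℝ) : ℝ :=
  sepExp n (fun σ => (f σ - sepExp n f) ^ 2)

/-- `B₁^{+,n}(σ)`: the length of the first indecomposable block (0-indexed positions). -/
noncomputable def Bplus {n : ℕ} (σ : Equiv.Perm (Fin n)) : ℕ :=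
  sInf {j | 1 ≤ j ∧ ∀ i : Fin n, (i : ℕ) < j → (σ i : ℕ) < j}

/-- `B₁^{-,n}(σ)`: the length of the first skew indecomposable block (0-indexed positions). -/
noncomputable def Bminus {n : ℕ} (σ : Equiv.Perm (Fin n)) : ℕ :=
  sInf {j | 1 ≤ j ∧ ∀ i : Fin n, (i : ℕ) < j → n - j ≤ (σ i : ℕ)}

/-- Expectation over indecomposable separable permutations of `[n]`, i.e. the conditional
expectation under the uniform measure on `SEP n` given `{B₁^{+,n} = n}`. -/
noncomputable def indecExp (n : ℕ) (f : Equiv.Perm (Fin n) → ℝ) : ℝ :=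
  (∑ σ ∈ (SEP n).filter (fun σ => Bplus σ = n), f σ) /
    ((SEP n).filter (fun σ => Bplus σ = n)).card

section SepAuxiliary


/-- prefix of length `j` is closed under `σ` (values below `j`). -/
def PClosed {n : ℕ} (σ : Equiv.Perm (Fin n)) (j : ℕ) : Prop :=
  ∀ i : Fin n, (i : ℕ) < j → (σ i : ℕ) < j

def TClosed {n : ℕ} (σ : Equiv.Perm (Fin n)) (j : ℕ) : Prop :=
  ∀ i : Fin n, (i : ℕ) < j → n - j ≤ (σ i : ℕ)

lemma bplus_def {n : ℕ} (σ : Equiv.Perm (Fin n)) :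
    Bplus σ = sInf {j | 1 ≤ j ∧ PClosed σ j} := rfl

lemma bminus_def {n : ℕ} (σ : Equiv.Perm (Fin n)) :
    Bminus σ = sInf {j | 1 ≤ j ∧ TClosed σ j} := rfl

lemma pclosed_top {n : ℕ} (σ : Equiv.Perm (Fin n)) : PClosed σ n := fun i _ => (σ i).isLt

lemma tclosed_top {n : ℕ} (σ : Equiv.Perm (Fin n)) : TClosed σ n := by
  intro i _; omega

lemma bplus_setmem {n : ℕ} (σ : Equiv.Perm (Fin n)) (hn : 1 ≤ n) :
    1 ≤ Bplus σ ∧ PClosed σ (Bplus σ) := by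
  have h : ({j | 1 ≤ j ∧ PClosed σ j} : Set ℕ).Nonempty := ⟨n, hn, pclosed_top σ⟩
  exact Nat.sInf_mem h

lemma bplus_le {n : ℕ} (σ : Equiv.Perm (Fin n)) (hn : 1 ≤ n) : Bplus σ ≤ n :=
  Nat.sInf_le ⟨hn, pclosed_top σ⟩

lemma bplus_le_of {n : ℕ} {σ : Equiv.Perm (Fin n)} {j : ℕ} (h1 : 1 ≤ j) (h : PClosed σ j) :
    Bplus σ ≤ j := Nat.sInf_le ⟨h1, h⟩

lemma bminus_setmem {n : ℕ} (σ : Equiv.Perm (Fin n)) (hn : 1 ≤ n) :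
    1 ≤ Bminus σ ∧ TClosed σ (Bminus σ) := by
  have h : ({j | 1 ≤ j ∧ TClosed σ j} : Set ℕ).Nonempty := ⟨n, hn, tclosed_top σ⟩
  exact Nat.sInf_mem h

lemma bminus_le {n : ℕ} (σ : Equiv.Perm (Fin n)) (hn : 1 ≤ n) : Bminus σ ≤ n :=
  Nat.sInf_le ⟨hn, tclosed_top σ⟩

lemma bminus_le_of {n : ℕ} {σ : Equiv.Perm (Fin n)} {j : ℕ} (h1 : 1 ≤ j) (h : TClosed σ j) :
    Bminus σ ≤ j := Nat.sInf_le ⟨h1, h⟩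

/-- cardinality of the set of positions `< k` in `Fin n`. -/
lemma card_filter_lt (n k : ℕ) :
    (Finset.univ.filter (fun i : Fin n => (i : ℕ) < k)).card = min k n := by
  rw [show min k n = (Finset.range (min k n)).card from (Finset.card_range _).symm]
  apply Finset.card_bij (fun (i : Fin n) _ => (i : ℕ))
  · intro a ha
    rw [Finset.mem_filter] at ha
    rw [Finset.mem_range]
    exact lt_min ha.2 a.isLt
  · intro a _ b _ h; exact Fin.val_injective h
  · intro b hb
    rw [Finset.mem_range] at hb
    refine ⟨⟨b, lt_of_lt_of_le hb (min_le_right _ _)⟩, ?_, rfl⟩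
    rw [Finset.mem_filter]
    exact ⟨Finset.mem_univ _, lt_of_lt_of_le hb (min_le_left _ _)⟩

/-- cardinality of the set of values in `[M, K)` in `Fin n`, for `M ≤ K`. -/
lemma card_filter_window (n M K : ℕ) (hMK : M ≤ K) :
    (Finset.univ.filter (fun v : Fin n => M ≤ (v : ℕ) ∧ (v : ℕ) < K)).card
      = min K n - min M n := by
  have h1 : (Finset.univ.filter (fun v : Fin n => M ≤ (v : ℕ) ∧ (v : ℕ) < K))
      = (Finset.univ.filter (fun v : Fin n => (v : ℕ) < K)) \
        (Finset.univ.filter (fun v : Fin n => (v : ℕ) < M)) := by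
    ext v
    simp only [Finset.mem_filter, Finset.mem_univ, true_and, Finset.mem_sdiff, not_lt]
    omega
  rw [h1, Finset.card_sdiff_of_subset]
  · rw [card_filter_lt, card_filter_lt]
  · intro v hv
    simp only [Finset.mem_filter, Finset.mem_univ, true_and] at hv ⊢
    omega

/-- cardinality of positions whose value lies in the window. -/
lemma card_filter_window_perm {n : ℕ} (σ : Equiv.Perm (Fin n)) (M K : ℕ) (hMK : M ≤ K) :
    (Finset.univ.filter (fun i : Fin n => M ≤ (σ i : ℕ) ∧ (σ i : ℕ) < K)).card
      = min K n - min M n := by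
  rw [← card_filter_window n M K hMK]
  apply Finset.card_bij (fun i _ => σ i)
  · intro a ha
    rw [Finset.mem_filter] at ha ⊢
    exact ⟨Finset.mem_univ _, ha.2⟩
  · intro a _ b _ h; exact σ.injective h
  · intro b hb
    rw [Finset.mem_filter] at hb
    refine ⟨σ.symm b, ?_, by simp⟩
    rw [Finset.mem_filter]
    simpa using hb.2

-- ### complement
def cmpl {n : ℕ} (σ : Equiv.Perm (Fin n)) : Equiv.Perm (Fin n) := σ.trans Fin.revPerm

lemma cmpl_apply (σ : Equiv.Perm (Fin n)) (i : Fin n) : cmpl σ i = (σ i).rev := rfl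

lemma cmpl_val (σ : Equiv.Perm (Fin n)) (i : Fin n) :
    (cmpl σ i : ℕ) = n - 1 - (σ i : ℕ) := by
  rw [cmpl_apply, Fin.val_rev]; omega

lemma cmpl_cmpl (σ : Equiv.Perm (Fin n)) : cmpl (cmpl σ) = σ := by
  ext i
  rw [cmpl_apply, cmpl_apply, Fin.rev_rev]

lemma contains_cmpl {σ : Equiv.Perm (Fin n)} {τ τ' : Fin 4 → Fin 4}
    (h : ∀ a b : Fin 4, τ a < τ b ↔ τ' b < τ' a) :
    ContainsPattern (cmpl σ) τ ↔ ContainsPattern σ τ' := by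
  constructor
  · rintro ⟨f, hm, hiff⟩
    refine ⟨f, hm, fun a b => ?_⟩
    rw [← (h b a), hiff b a, cmpl_apply, cmpl_apply, Fin.rev_lt_rev]
  · rintro ⟨f, hm, hiff⟩
    refine ⟨f, hm, fun a b => ?_⟩
    rw [h a b, hiff b a, cmpl_apply, cmpl_apply, Fin.rev_lt_rev]

lemma separable_cmpl (σ : Equiv.Perm (Fin n)) : Separable (cmpl σ) ↔ Separable σ := by
  have h12 : ∀ a b : Fin 4, (![1, 3, 0, 2] : Fin 4 → Fin 4) a < ![1, 3, 0, 2] b ↔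
      (![2, 0, 3, 1] : Fin 4 → Fin 4) b < ![2, 0, 3, 1] a := by decide
  have h21 : ∀ a b : Fin 4, (![2, 0, 3, 1] : Fin 4 → Fin 4) a < ![2, 0, 3, 1] b ↔
      (![1, 3, 0, 2] : Fin 4 → Fin 4) b < ![1, 3, 0, 2] a := by decide
  unfold Separable
  rw [contains_cmpl h12, contains_cmpl h21]
  exact and_comm

lemma tclosed_iff_pclosed_cmpl (σ : Equiv.Perm (Fin n)) (j : ℕ) :
    TClosed σ j ↔ PClosed (cmpl σ) j := by
  constructor
  · intro h i hi
    have h2 := h i hi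
    have hv : (σ i : ℕ) < n := (σ i).isLt
    rw [cmpl_val]
    omega
  · intro h i hi
    have h2 := h i hi
    rw [cmpl_val] at h2
    have hv : (σ i : ℕ) < n := (σ i).isLt
    omega

lemma bminus_eq_bplus_cmpl (σ : Equiv.Perm (Fin n)) :
    sInf {j | 1 ≤ j ∧ TClosed σ j} = sInf {j | 1 ≤ j ∧ PClosed (cmpl σ) j} := by
  congr 1
  ext j
  simp only [Set.mem_setOf_eq, tclosed_iff_pclosed_cmpl]

-- ### interval prefixes
def Good {n : ℕ} (σ : Equiv.Perm (Fin n)) (k m : ℕ) : Prop :=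
  ∀ i : Fin n, ((i : ℕ) < k ↔ (m ≤ (σ i : ℕ) ∧ (σ i : ℕ) < m + k))

lemma good_card {σ : Equiv.Perm (Fin n)} {k m : ℕ} (hk : k ≤ n) (hG : Good σ k m) :
    min (m + k) n - min m n = k := by
  have h1 : Finset.univ.filter (fun i : Fin n => (i : ℕ) < k)
      = Finset.univ.filter (fun i : Fin n => m ≤ (σ i : ℕ) ∧ (σ i : ℕ) < m + k) := by
    apply Finset.filter_congr
    intro i _
    exact hG i
  have h2 := card_filter_lt n k
  rw [h1, card_filter_window_perm σ m (m + k) (Nat.le_add_right _ _)] at h2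
  omega

lemma good_bounds {σ : Equiv.Perm (Fin n)} {k m : ℕ} (hk1 : 1 ≤ k) (hk : k ≤ n)
    (hG : Good σ k m) : m + k ≤ n := by
  have hn : 0 < n := lt_of_lt_of_le hk1 hk
  have h0 := (hG ⟨0, hn⟩).mp (by show (0:ℕ) < k; omega)
  have hv : (σ ⟨0, hn⟩ : ℕ) < n := (σ _).isLt
  have hc := good_card hk hG
  omega

lemma good_cmpl {σ : Equiv.Perm (Fin n)} {k m : ℕ} (hk1 : 1 ≤ k) (hk : k ≤ n)
    (hG : Good σ k m) : Good (cmpl σ) k (n - m - k) := by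
  have hmk := good_bounds hk1 hk hG
  intro i
  have h := hG i
  have hv : (σ i : ℕ) < n := (σ i).isLt
  rw [cmpl_val]
  constructor
  · intro hi
    have := h.mp hi
    omega
  · intro hw
    apply h.mpr
    omega

lemma good_one (σ : Equiv.Perm (Fin n)) (hn : 0 < n) : Good σ 1 ((σ ⟨0, hn⟩ : ℕ)) := by
  intro i
  constructor
  · intro hi
    have : i = ⟨0, hn⟩ := Fin.ext (show (i : ℕ) = 0 by omega)
    subst this
    omega
  · intro hw
    have : σ i = σ ⟨0, hn⟩ := Fin.ext (by omega)
    have := σ.injective this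
    subst this
    simp
-- ### the dichotomy argument

lemma strictMono_vec4 {α : Type*} [Preorder α] {a b c d : α}
    (h1 : a < b) (h2 : b < c) (h3 : c < d) : StrictMono ![a, b, c, d] := by
  rw [Fin.strictMono_iff_lt_succ]
  intro i
  fin_cases i <;> simpa

lemma iff_of_imp {n : ℕ} {σ : Equiv.Perm (Fin n)} {f : Fin 4 → Fin n} {τ : Fin 4 → Fin 4}
    (hinj : Function.Injective τ)
    (key : ∀ a b : Fin 4, τ a < τ b → σ (f a) < σ (f b)) :
    ∀ a b : Fin 4, τ a < τ b ↔ σ (f a) < σ (f b) := by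
  intro a b
  constructor
  · exact key a b
  · intro h
    rcases lt_trichotomy (τ a) (τ b) with h1 | h1 | h1
    · exact h1
    · exact absurd h (by rw [hinj h1]; exact lt_irrefl _)
    · exact absurd h (not_lt_of_gt (key b a h1))

lemma contains_3142 {n : ℕ} {σ : Equiv.Perm (Fin n)} {p0 p1 p2 p3 : Fin n}
    (q1 : p0 < p1) (q2 : p1 < p2) (q3 : p2 < p3)
    (v1 : σ p1 < σ p3) (v2 : σ p3 < σ p0) (v3 : σ p0 < σ p2) :
    ContainsPattern σ (![2, 0, 3, 1] : Fin 4 → Fin 4) := by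
  have t1 : σ p1 < σ p0 := v1.trans v2
  have t2 : σ p1 < σ p2 := t1.trans v3
  have t3 : σ p3 < σ p2 := v2.trans v3
  refine ⟨![p0, p1, p2, p3], strictMono_vec4 q1 q2 q3, ?_⟩
  apply iff_of_imp (by decide)
  intro a b hab
  fin_cases a <;> fin_cases b <;>
    first
      | exact absurd hab (by decide)
      | exact v1 | exact v2 | exact v3 | exact t1 | exact t2 | exact t3

/-- counting: a prefix-window iff forces the cardinalities to agree -/
lemma iff_card {σ : Equiv.Perm (Fin n)} {K M L : ℕ}
    (h : ∀ i : Fin n, ((i : ℕ) < K ↔ (M ≤ (σ i : ℕ) ∧ (σ i : ℕ) < L)))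
    (hML : M ≤ L) : min K n = min L n - min M n := by
  have h1 : Finset.univ.filter (fun i : Fin n => (i : ℕ) < K)
      = Finset.univ.filter (fun i : Fin n => M ≤ (σ i : ℕ) ∧ (σ i : ℕ) < L) := by
    apply Finset.filter_congr
    intro i _
    exact h i
  have h2 := card_filter_lt n K
  rw [h1, card_filter_window_perm σ M L hML] at h2
  omega

lemma caseA {n : ℕ} {σ : Equiv.Perm (Fin n)} {k m : ℕ}
    (hk1 : 1 ≤ k) (hkn : k ≤ n - 1) (hn : 2 ≤ n)
    (hG : Good σ k m)
    (hmax : ∀ k' m', k < k' → k' ≤ n - 1 → ¬ Good σ k' m')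
    (hm1 : 1 ≤ m) (hmk : m + k < n)
    (hc : (σ ⟨k, by omega⟩ : ℕ) < m) :
    ContainsPattern σ (![2, 0, 3, 1] : Fin 4 → Fin 4) := by
  -- the first position whose value is ≥ m + k
  set Hi : Set ℕ := {t | ∃ h : t < n, m + k ≤ (σ ⟨t, h⟩ : ℕ)} with hHi
  have hne : Hi.Nonempty := by
    refine ⟨(σ.symm ⟨m + k, hmk⟩ : Fin n), (σ.symm ⟨m + k, hmk⟩).isLt, ?_⟩
    rw [Fin.eta, Equiv.apply_symm_apply]
  set ks : ℕ := sInf Hi with hks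
  obtain ⟨hksn, hksv⟩ : ∃ h : ks < n, m + k ≤ (σ ⟨ks, h⟩ : ℕ) := Nat.sInf_mem hne
  have hmin : ∀ t (h : t < n), t < ks → (σ ⟨t, h⟩ : ℕ) < m + k := by
    intro t h ht
    have := Nat.notMem_of_lt_sInf (s := Hi) ht
    rw [hHi] at this
    simp only [Set.mem_setOf_eq, not_exists] at this
    have h2 := this h
    omega
  have hkks : k < ks := by
    rcases Nat.lt_or_ge k ks with h | h
    · exact h
    · exfalso
      rcases Nat.lt_or_ge ks k with h2 | h2
      · have h3 := (hG ⟨ks, hksn⟩).mp (by simpa using h2)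
        omega
      · have hkek : ks = k := le_antisymm h h2
        have : σ ⟨ks, hksn⟩ = σ ⟨k, by omega⟩ := by congr 1; exact Fin.ext hkek
        rw [this] at hksv
        omega
  -- the low positions between k and ks
  set Lo : Finset (Fin n) := Finset.univ.filter (fun i => k ≤ (i : ℕ) ∧ (i : ℕ) < ks)
    with hLo
  have hkmem : (⟨k, by omega⟩ : Fin n) ∈ Lo := by
    rw [hLo, Finset.mem_filter]
    exact ⟨Finset.mem_univ _, by simp, by simpa using hkks⟩
  have hLone : (Lo.image (fun i => (σ i : ℕ))).Nonempty :=
    ⟨_, Finset.mem_image_of_mem _ hkmem⟩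
  set vmin : ℕ := (Lo.image (fun i => (σ i : ℕ))).min' hLone with hvm
  obtain ⟨lpos, hlposLo, hlposv⟩ : ∃ lpos ∈ Lo, (σ lpos : ℕ) = vmin := by
    have := Finset.min'_mem _ hLone
    rw [Finset.mem_image] at this
    obtain ⟨i, hi, hiv⟩ := this
    exact ⟨i, hi, hiv⟩
  have hvmin_le : ∀ i ∈ Lo, vmin ≤ (σ i : ℕ) := by
    intro i hi
    exact Finset.min'_le _ _ (Finset.mem_image_of_mem _ hi)
  have hlo_lt_m : ∀ i ∈ Lo, (σ i : ℕ) < m := by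
    intro i hi
    rw [hLo, Finset.mem_filter] at hi
    obtain ⟨-, hik, hiks⟩ := hi
    have h1 : (σ ⟨(i : ℕ), i.isLt⟩ : ℕ) < m + k := hmin _ _ hiks
    rw [Fin.eta] at h1
    have h2 := (hG i)
    have h3 : ¬ ((i : ℕ) < k) := by omega
    rw [h2] at h3
    omega
  have hvmin_lt_m : vmin < m := by
    rw [← hlposv]
    exact hlo_lt_m _ hlposLo
  have hlpos_bounds : k ≤ (lpos : ℕ) ∧ (lpos : ℕ) < ks := by
    rw [hLo, Finset.mem_filter] at hlposLo
    exact ⟨hlposLo.2.1, hlposLo.2.2⟩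
  by_cases hgap : ∃ v : Fin n, vmin < (v : ℕ) ∧ (v : ℕ) < m ∧ ks ≤ ((σ.symm v : Fin n) : ℕ)
  · -- found the pattern 3142 (encoded ![2,0,3,1])
    obtain ⟨v, hv1, hv2, hv3⟩ := hgap
    set p0 : Fin n := ⟨0, by omega⟩ with hp0
    set p2 : Fin n := ⟨ks, hksn⟩ with hp2
    set p3 : Fin n := σ.symm v with hp3
    have hσp3 : σ p3 = v := Equiv.apply_symm_apply _ _
    have hA := (hG p0).mp (by simp [hp0]; omega)
    have hC : m + k ≤ (σ p2 : ℕ) := hksv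
    have hr : ks < (p3 : ℕ) := by
      rcases Nat.lt_or_ge ks (p3 : ℕ) with h | h
      · exact h
      · exfalso
        have : (p3 : ℕ) = ks := by omega
        have : p3 = p2 := Fin.ext (by rw [this])
        rw [← this] at hC
        rw [hσp3] at hC
        omega
    have hB : (σ lpos : ℕ) = vmin := hlposv
    have hD : (σ p3 : ℕ) = (v : ℕ) := by rw [hσp3]
    have hp0v : (p0 : ℕ) = 0 := rfl
    have hp2v : (p2 : ℕ) = ks := rfl
    refine contains_3142 (p0 := p0) (p1 := lpos) (p2 := p2) (p3 := p3) ?_ ?_ ?_ ?_ ?_ ?_ <;>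
      rw [Fin.lt_def] <;> omega
  · -- no gap: contradiction with maximality
    exfalso
    push_neg at hgap
    have hIff : ∀ i : Fin n, ((i : ℕ) < ks ↔ (vmin ≤ (σ i : ℕ) ∧ (σ i : ℕ) < m + k)) := by
      intro i
      constructor
      · intro hi
        rcases Nat.lt_or_ge (i : ℕ) k with h | h
        · have := (hG i).mp h
          omega
        · have hiLo : i ∈ Lo := by
            rw [hLo, Finset.mem_filter]
            exact ⟨Finset.mem_univ _, h, hi⟩
          have := hvmin_le i hiLo
          have := hlo_lt_m i hiLo
          omega
      · rintro ⟨h1, h2⟩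
        rcases Nat.lt_or_ge (σ i : ℕ) m with h | h
        · rcases Nat.lt_or_ge vmin (σ i : ℕ) with h3 | h3
          · have h4 := hgap (σ i) h3 h
            rw [Equiv.symm_apply_apply] at h4
            omega
          · have h5 : (σ i : ℕ) = vmin := by omega
            have h6 : σ i = σ lpos := Fin.ext (by rw [h5, hlposv])
            have h7 : i = lpos := σ.injective h6
            rw [h7]
            omega
        · have := (hG i).mpr ⟨h, h2⟩
          omega
    have hcard := iff_card hIff (by omega)
    have hksmk : ks = m + k - vmin := by
      have hv : vmin < n := by omega
      omega
    have hGood : Good σ ks vmin := by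
      intro i
      have := hIff i
      have : vmin + ks = m + k := by omega
      rw [this]
      exact hIff i
    exact hmax ks vmin hkks (by omega) hGood

lemma exists_pattern {n : ℕ} (hn : 2 ≤ n) (σ : Equiv.Perm (Fin n))
    (hplus : ∀ j, 1 ≤ j → j ≤ n - 1 → ¬ PClosed σ j)
    (hminus : ∀ j, 1 ≤ j → j ≤ n - 1 → ¬ TClosed σ j) :
    ContainsPattern σ (![1, 3, 0, 2] : Fin 4 → Fin 4) ∨
      ContainsPattern σ (![2, 0, 3, 1] : Fin 4 → Fin 4) := by
  set F : Finset ℕ := (Finset.Icc 1 (n - 1)).filter (fun k => ∃ m, Good σ k m) with hF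
  have h1F : 1 ∈ F := by
    rw [hF, Finset.mem_filter]
    refine ⟨by rw [Finset.mem_Icc]; omega, ⟨_, good_one σ (by omega)⟩⟩
  have hFne : F.Nonempty := ⟨1, h1F⟩
  set k : ℕ := F.max' hFne with hk
  have hkF : k ∈ F := Finset.max'_mem _ _
  rw [hF, Finset.mem_filter, Finset.mem_Icc] at hkF
  obtain ⟨⟨hk1, hkn⟩, m, hG⟩ := hkF
  have hmax : ∀ k' m', k < k' → k' ≤ n - 1 → ¬ Good σ k' m' := by
    intro k' m' hlt hle hG'
    have : k' ∈ F := by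
      rw [hF, Finset.mem_filter, Finset.mem_Icc]
      exact ⟨⟨by omega, hle⟩, m', hG'⟩
    have := Finset.le_max' F k' this
    omega
  have hm1 : 1 ≤ m := by
    by_contra h
    have hm0 : m = 0 := by omega
    apply hplus k hk1 hkn
    intro i hi
    have := (hG i).mp hi
    omega
  have hmkn : m + k ≤ n := good_bounds hk1 (by omega) hG
  have hmk : m + k < n := by
    rcases Nat.lt_or_ge (m + k) n with h | h
    · exact h
    · exfalso
      apply hminus k hk1 hkn
      intro i hi
      have := (hG i).mp hi
      omega
  have hck := hG ⟨k, by omega⟩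
  have hcknot : ¬ ((⟨k, by omega⟩ : Fin n) : ℕ) < k := by simp
  rw [hck] at hcknot
  rcases Nat.lt_or_ge (σ ⟨k, by omega⟩ : ℕ) m with hc | hc
  · exact Or.inr (caseA hk1 hkn hn hG hmax hm1 hmk hc)
  · left
    have hc2 : m + k ≤ (σ ⟨k, by omega⟩ : ℕ) := by omega
    have hG' : Good (cmpl σ) k (n - m - k) := good_cmpl hk1 (by omega) hG
    have hmax' : ∀ k' m', k < k' → k' ≤ n - 1 → ¬ Good (cmpl σ) k' m' := by
      intro k' m' hlt hle hGc
      have := good_cmpl (by omega) (by omega) hGc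
      rw [cmpl_cmpl] at this
      exact hmax k' (n - m' - k') hlt hle this
    have hc' : (cmpl σ ⟨k, by omega⟩ : ℕ) < n - m - k := by
      rw [cmpl_val]
      have : (σ ⟨k, by omega⟩ : ℕ) < n := (σ _).isLt
      omega
    have hpat := caseA hk1 hkn hn hG' hmax' (by omega) (by omega) hc'
    rw [contains_cmpl (τ' := (![1, 3, 0, 2] : Fin 4 → Fin 4)) (by decide)] at hpat
    exact hpat
-- ## the direct sum of two permutations
variable {a b : ℕ}

noncomputable def psum (α : Equiv.Perm (Fin a)) (β : Equiv.Perm (Fin b)) :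
    Equiv.Perm (Fin (a + b)) :=
  finSumFinEquiv.permCongr (α.sumCongr β)

lemma psum_castAdd (α : Equiv.Perm (Fin a)) (β : Equiv.Perm (Fin b)) (i : Fin a) :
    psum α β (Fin.castAdd b i) = Fin.castAdd b (α i) := by
  rw [psum, Equiv.permCongr_apply, finSumFinEquiv_symm_apply_castAdd]
  simp

lemma psum_natAdd (α : Equiv.Perm (Fin a)) (β : Equiv.Perm (Fin b)) (i : Fin b) :
    psum α β (Fin.natAdd a i) = Fin.natAdd a (β i) := by
  rw [psum, Equiv.permCongr_apply, finSumFinEquiv_symm_apply_natAdd]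
  simp

lemma psum_val_lt (α : Equiv.Perm (Fin a)) (β : Equiv.Perm (Fin b)) {i : Fin (a + b)}
    (h : (i : ℕ) < a) : (psum α β i : ℕ) = (α ⟨(i : ℕ), h⟩ : ℕ) := by
  obtain ⟨j, rfl⟩ : ∃ j : Fin a, i = Fin.castAdd b j := ⟨⟨(i : ℕ), h⟩, Fin.ext rfl⟩
  rw [psum_castAdd]
  have h2 : (⟨((Fin.castAdd b j : Fin (a + b)) : ℕ), h⟩ : Fin a) = j := Fin.ext rfl
  rw [h2]
  rfl

lemma psum_val_ge (α : Equiv.Perm (Fin a)) (β : Equiv.Perm (Fin b)) {i : Fin (a + b)}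
    (h : a ≤ (i : ℕ)) : (psum α β i : ℕ) = a + (β ⟨(i : ℕ) - a, by omega⟩ : ℕ) := by
  obtain ⟨j, rfl⟩ : ∃ j : Fin b, i = Fin.natAdd a j :=
    ⟨⟨(i : ℕ) - a, by omega⟩, Fin.ext (show (i : ℕ) = a + ((i : ℕ) - a) by omega)⟩
  rw [psum_natAdd]
  have h2 : (⟨((Fin.natAdd a j : Fin (a + b)) : ℕ) - a, by omega⟩ : Fin b) = j :=
    Fin.ext (show a + (j : ℕ) - a = (j : ℕ) by omega)
  rw [h2]
  rfl

lemma psum_inj {α α' : Equiv.Perm (Fin a)} {β β' : Equiv.Perm (Fin b)}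
    (h : psum α β = psum α' β') : α = α' ∧ β = β' := by
  constructor
  · ext i
    have h1 := congrArg (fun σ : Equiv.Perm (Fin (a+b)) => σ (Fin.castAdd b i)) h
    simp only [psum_castAdd] at h1
    simpa using congrArg Fin.val h1
  · ext i
    have h1 := congrArg (fun σ : Equiv.Perm (Fin (a+b)) => σ (Fin.natAdd a i)) h
    simp only [psum_natAdd] at h1
    have h2 := congrArg Fin.val h1
    have h3 : a + ((β i : ℕ)) = a + ((β' i : ℕ)) := h2
    omega
lemma psum_val_lt' (α : Equiv.Perm (Fin a)) (β : Equiv.Perm (Fin b)) {i : Fin (a + b)}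
    (h : (i : ℕ) < a) : (psum α β i : ℕ) < a := by
  rw [psum_val_lt α β h]
  exact (α _).isLt

lemma psum_val_ge' (α : Equiv.Perm (Fin a)) (β : Equiv.Perm (Fin b)) {i : Fin (a + b)}
    (h : a ≤ (i : ℕ)) : a ≤ (psum α β i : ℕ) := by
  rw [psum_val_ge α β h]
  omega

lemma pclosed_psum_iff (α : Equiv.Perm (Fin a)) (β : Equiv.Perm (Fin b)) {j : ℕ}
    (hj : j ≤ a) : PClosed (psum α β) j ↔ PClosed α j := by
  constructor
  · intro h i hi
    have h2 := h (Fin.castAdd b i) (by simpa using hi)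
    rw [psum_val_lt α β (by simpa using i.isLt)] at h2
    have h3 : (⟨((Fin.castAdd b i : Fin (a + b)) : ℕ), by simpa using i.isLt⟩ : Fin a) = i :=
      Fin.ext rfl
    rwa [h3] at h2
  · intro h i hi
    have hia : (i : ℕ) < a := lt_of_lt_of_le hi hj
    rw [psum_val_lt α β hia]
    exact h _ hi

lemma bplus_psum (α : Equiv.Perm (Fin a)) (β : Equiv.Perm (Fin b)) (ha : 1 ≤ a) :
    Bplus (psum α β) = Bplus α := by
  have h1 : Bplus α ≤ a := bplus_le α ha
  obtain ⟨hα1, hα2⟩ := bplus_setmem α ha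
  have h2 : Bplus (psum α β) ≤ Bplus α :=
    bplus_le_of hα1 ((pclosed_psum_iff α β h1).mpr hα2)
  obtain ⟨hs1, hs2⟩ := bplus_setmem (psum α β) (by omega)
  have h3 : PClosed α (Bplus (psum α β)) :=
    (pclosed_psum_iff α β (le_trans h2 h1)).mp hs2
  exact le_antisymm h2 (bplus_le_of hs1 h3)

-- pattern transfer
lemma contains_psum_left {k : ℕ} {τ : Fin k → Fin k} {α : Equiv.Perm (Fin a)}
    {β : Equiv.Perm (Fin b)} (h : ContainsPattern α τ) : ContainsPattern (psum α β) τ := by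
  obtain ⟨f, hm, hiff⟩ := h
  refine ⟨fun x => Fin.castAdd b (f x), fun x y hxy => by
    rw [Fin.lt_def]
    simpa using Fin.lt_def.mp (hm hxy), fun x y => ?_⟩
  rw [hiff x y, Fin.lt_def, Fin.lt_def, psum_castAdd, psum_castAdd]
  simp

lemma contains_psum_right {k : ℕ} {τ : Fin k → Fin k} {α : Equiv.Perm (Fin a)}
    {β : Equiv.Perm (Fin b)} (h : ContainsPattern β τ) : ContainsPattern (psum α β) τ := by
  obtain ⟨f, hm, hiff⟩ := h
  refine ⟨fun x => Fin.natAdd a (f x), fun x y hxy => by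
    rw [Fin.lt_def]
    have := Fin.lt_def.mp (hm hxy)
    simp only [Fin.coe_natAdd]
    omega, fun x y => ?_⟩
  rw [hiff x y, Fin.lt_def, Fin.lt_def, psum_natAdd, psum_natAdd]
  simp only [Fin.coe_natAdd]
  omega

lemma contains_psum_split {τ : Fin 4 → Fin 4}
    (hτ : τ = (![1, 3, 0, 2] : Fin 4 → Fin 4) ∨ τ = (![2, 0, 3, 1] : Fin 4 → Fin 4))
    {α : Equiv.Perm (Fin a)} {β : Equiv.Perm (Fin b)}
    (h : ContainsPattern (psum α β) τ) : ContainsPattern α τ ∨ ContainsPattern β τ := by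
  obtain ⟨f, hm, hiff⟩ := h
  by_cases hall : ∀ x : Fin 4, (f x : ℕ) < a
  · left
    refine ⟨fun x => ⟨(f x : ℕ), hall x⟩, fun x y hxy => by
      rw [Fin.lt_def]
      exact Fin.lt_def.mp (hm hxy), fun x y => ?_⟩
    rw [hiff x y, Fin.lt_def, Fin.lt_def, psum_val_lt α β (hall x), psum_val_lt α β (hall y)]
  · by_cases hall2 : ∀ x : Fin 4, a ≤ (f x : ℕ)
    · right
      have hpf : ∀ x : Fin 4, (f x : ℕ) - a < b := by
        intro x
        have := (f x).isLt
        have := hall2 x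
        omega
      have hval : ∀ x : Fin 4,
          (psum α β (f x) : ℕ) = a + ((β ⟨(f x : ℕ) - a, hpf x⟩ : Fin b) : ℕ) := fun x =>
        psum_val_ge α β (hall2 x)
      refine ⟨fun x => ⟨(f x : ℕ) - a, hpf x⟩, fun x y hxy => ?_, fun x y => ?_⟩
      · have h1 := Fin.lt_def.mp (hm hxy)
        have h2 := hall2 x
        exact Fin.lt_def.mpr (show (f x : ℕ) - a < (f y : ℕ) - a by omega)
      · show τ x < τ y ↔ β ⟨(f x : ℕ) - a, hpf x⟩ < β ⟨(f y : ℕ) - a, hpf y⟩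
        rw [hiff x y, Fin.lt_def, Fin.lt_def, hval x, hval y]
        omega
    · exfalso
      push_neg at hall hall2
      obtain ⟨y0, hy0⟩ := hall
      obtain ⟨x0, hx0⟩ := hall2
      have cross : ∀ x y : Fin 4, (f x : ℕ) < a → a ≤ (f y : ℕ) → τ x < τ y := by
        intro x y hx hy
        apply (hiff x y).mpr
        rw [Fin.lt_def]
        have h1 := psum_val_lt' α β hx
        have h2 := psum_val_ge' α β hy
        omega
      have hmono : ∀ x y : Fin 4, x ≤ y → (f x : ℕ) ≤ (f y : ℕ) := by
        intro x y hxy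
        exact Fin.le_def.mp (hm.monotone hxy)
      have h0 : (f 0 : ℕ) < a := lt_of_le_of_lt (hmono 0 x0 (Fin.zero_le _)) hx0
      have h3 : a ≤ (f 3 : ℕ) := le_trans hy0 (hmono y0 3 (Fin.le_last _))
      by_cases h1 : (f 1 : ℕ) < a
      · by_cases h2 : (f 2 : ℕ) < a
        · rcases hτ with rfl | rfl
          · exact absurd (cross 1 3 h1 h3) (by decide)
          · exact absurd (cross 2 3 h2 h3) (by decide)
        · rcases hτ with rfl | rfl
          · exact absurd (cross 1 2 h1 (by omega)) (by decide)
          · exact absurd (cross 0 3 h0 h3) (by decide)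
      · have h2 : a ≤ (f 2 : ℕ) := le_trans (by omega) (hmono 1 2 (by decide))
        rcases hτ with rfl | rfl
        · exact absurd (cross 0 2 h0 h2) (by decide)
        · exact absurd (cross 0 1 h0 (by omega)) (by decide)

lemma separable_psum (α : Equiv.Perm (Fin a)) (β : Equiv.Perm (Fin b)) :
    Separable (psum α β) ↔ (Separable α ∧ Separable β) := by
  constructor
  · rintro ⟨h1, h2⟩
    exact ⟨⟨fun hc => h1 (contains_psum_left hc), fun hc => h2 (contains_psum_left hc)⟩,
      ⟨fun hc => h1 (contains_psum_right hc), fun hc => h2 (contains_psum_right hc)⟩⟩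
  · rintro ⟨⟨ha1, ha2⟩, ⟨hb1, hb2⟩⟩
    constructor
    · intro hc
      rcases contains_psum_split (Or.inl rfl) hc with h | h
      · exact ha1 h
      · exact hb1 h
    · intro hc
      rcases contains_psum_split (Or.inr rfl) hc with h | h
      · exact ha2 h
      · exact hb2 h

-- decomposition of a permutation with a closed prefix
lemma pclosed_compl {σ : Equiv.Perm (Fin (a + b))} (h : PClosed σ a) :
    ∀ i : Fin (a + b), a ≤ (i : ℕ) → a ≤ (σ i : ℕ) := by
  intro i hi
  by_contra hlt
  push_neg at hlt
  set T : Finset (Fin (a + b)) := Finset.univ.filter (fun v => (v : ℕ) < a) with hT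
  have hsub : Finset.image σ T ⊆ T := by
    intro v hv
    rw [Finset.mem_image] at hv
    obtain ⟨t, ht, rfl⟩ := hv
    rw [hT, Finset.mem_filter] at ht ⊢
    exact ⟨Finset.mem_univ _, h t ht.2⟩
  have hcard : (Finset.image σ T).card = T.card :=
    Finset.card_image_of_injective T σ.injective
  have heq : Finset.image σ T = T := Finset.eq_of_subset_of_card_le hsub (le_of_eq hcard.symm)
  have hσi : σ i ∈ T := by
    rw [hT, Finset.mem_filter]
    exact ⟨Finset.mem_univ _, hlt⟩
  rw [← heq, Finset.mem_image] at hσi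
  obtain ⟨t, ht, hti⟩ := hσi
  have : t = i := σ.injective hti
  subst this
  rw [hT, Finset.mem_filter] at ht
  omega

lemma exists_decomp {σ : Equiv.Perm (Fin (a + b))} (h : PClosed σ a) :
    ∃ (α : Equiv.Perm (Fin a)) (β : Equiv.Perm (Fin b)), σ = psum α β := by
  have hcompl := pclosed_compl h
  have hfa : ∀ i : Fin a, (σ (Fin.castAdd b i) : ℕ) < a := by
    intro i
    exact h _ (by simpa using i.isLt)
  have hfb : ∀ i : Fin b, a ≤ (σ (Fin.natAdd a i) : ℕ) := by
    intro i
    exact hcompl _ (by simp)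
  have hainj : Function.Injective
      (fun i : Fin a => (⟨(σ (Fin.castAdd b i) : ℕ), hfa i⟩ : Fin a)) := by
    intro x y hxy
    simp only [Fin.mk.injEq] at hxy
    have h2 : σ (Fin.castAdd b x) = σ (Fin.castAdd b y) := Fin.ext hxy
    have h3 := σ.injective h2
    exact Fin.ext (by simpa using congrArg Fin.val h3)
  have hbinj : Function.Injective
      (fun i : Fin b =>
        (⟨(σ (Fin.natAdd a i) : ℕ) - a,
          by have := (σ (Fin.natAdd a i)).isLt; have := hfb i; omega⟩ : Fin b)) := by
    intro x y hxy
    simp only [Fin.mk.injEq] at hxy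
    have hx := hfb x
    have hy := hfb y
    have h2 : σ (Fin.natAdd a x) = σ (Fin.natAdd a y) := Fin.ext (by omega)
    have h3 := σ.injective h2
    have h4 := congrArg Fin.val h3
    simp only [Fin.coe_natAdd] at h4
    exact Fin.ext (by omega)
  refine ⟨Equiv.ofBijective _ (Finite.injective_iff_bijective.mp hainj),
    Equiv.ofBijective _ (Finite.injective_iff_bijective.mp hbinj), ?_⟩
  ext i
  rcases Nat.lt_or_ge (i : ℕ) a with hia | hia
  · obtain ⟨j, rfl⟩ : ∃ j : Fin a, i = Fin.castAdd b j := ⟨⟨(i : ℕ), hia⟩, Fin.ext rfl⟩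
    rw [psum_castAdd]
    have hv : ((Equiv.ofBijective _ (Finite.injective_iff_bijective.mp hainj)) j : ℕ)
        = (σ (Fin.castAdd b j) : ℕ) := rfl
    rw [Fin.coe_castAdd]
    exact hv.symm
  · obtain ⟨j, rfl⟩ : ∃ j : Fin b, i = Fin.natAdd a j :=
      ⟨⟨(i : ℕ) - a, by have := i.isLt; omega⟩,
        Fin.ext (show (i : ℕ) = a + ((i : ℕ) - a) by omega)⟩
    rw [psum_natAdd]
    have hv : ((Equiv.ofBijective _ (Finite.injective_iff_bijective.mp hbinj)) j : ℕ)
        = (σ (Fin.natAdd a j) : ℕ) - a := rfl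
    have hb := hfb j
    rw [Fin.coe_natAdd, hv]
    omega

-- ### counting
lemma mem_SEP {σ : Equiv.Perm (Fin n)} : σ ∈ SEP n ↔ Separable σ := by
  rw [SEP, Finset.mem_filter]
  simp

lemma bminus_def' (σ : Equiv.Perm (Fin n)) : Bminus σ = Bplus (cmpl σ) :=
  bminus_eq_bplus_cmpl σ

lemma sep_one_card : (SEP 1).card = 1 := by
  have hall : ∀ σ : Equiv.Perm (Fin 1), Separable σ := by
    intro σ
    have hnp : ∀ τ : Fin 4 → Fin 4, ¬ ContainsPattern σ τ := by
      rintro τ ⟨f, hm, -⟩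
      have h01 : f 0 < f 1 := hm (by decide)
      have : f 0 = f 1 := Subsingleton.elim _ _
      rw [this] at h01
      exact lt_irrefl _ h01
    exact ⟨hnp _, hnp _⟩
  have : SEP 1 = Finset.univ := by
    rw [SEP]
    apply Finset.filter_true_of_mem
    intro σ _
    exact hall σ
  rw [this, Finset.card_univ]
  simp

lemma bplus_one (σ : Equiv.Perm (Fin 1)) : Bplus σ = 1 :=
  le_antisymm (bplus_le σ le_rfl) (bplus_setmem σ le_rfl).1

lemma A_one : ((SEP 1).filter fun σ => Bplus σ = 1).card = 1 := by
  rw [Finset.filter_true_of_mem (fun σ _ => bplus_one σ)]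
  exact sep_one_card

/-- fiber counting via the ⊕-decomposition bijection -/
lemma card_fiber (a b : ℕ) (ha : 1 ≤ a) (hb : 1 ≤ b) :
    ((SEP (a + b)).filter fun σ => Bplus σ = a).card
      = ((SEP a).filter fun α => Bplus α = a).card * (SEP b).card := by
  rw [← Finset.card_product]
  symm
  apply Finset.card_bij
    (fun (p : Equiv.Perm (Fin a) × Equiv.Perm (Fin b)) _ => psum p.1 p.2)
  · rintro ⟨α, β⟩ hp
    rw [Finset.mem_product, Finset.mem_filter] at hp
    obtain ⟨⟨hα, hBα⟩, hβ⟩ := hp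
    rw [Finset.mem_filter]
    refine ⟨mem_SEP.mpr ((separable_psum α β).mpr ⟨mem_SEP.mp hα, mem_SEP.mp hβ⟩), ?_⟩
    rw [bplus_psum α β ha, hBα]
  · rintro ⟨α, β⟩ h1 ⟨α', β'⟩ h2 heq
    obtain ⟨e1, e2⟩ := psum_inj heq
    rw [Prod.mk.injEq]
    exact ⟨e1, e2⟩
  · intro σ hσ
    rw [Finset.mem_filter] at hσ
    obtain ⟨hσs, hBσ⟩ := hσ
    have hPC : PClosed σ a := by
      have := (bplus_setmem σ (by omega)).2
      rwa [hBσ] at this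
    obtain ⟨α, β, rfl⟩ := exists_decomp hPC
    obtain ⟨hsa, hsb⟩ := (separable_psum α β).mp (mem_SEP.mp hσs)
    refine ⟨(α, β), ?_, rfl⟩
    rw [Finset.mem_product, Finset.mem_filter]
    refine ⟨⟨mem_SEP.mpr hsa, ?_⟩, mem_SEP.mpr hsb⟩
    rw [← bplus_psum α β ha, hBσ]

lemma card_cast (m m' : ℕ) (h : m = m') (j : ℕ) :
    ((SEP m).filter fun σ => Bplus σ = j).card
      = ((SEP m').filter fun σ => Bplus σ = j).card := by subst h; rfl

lemma sep_cast (m m' : ℕ) (h : m = m') : (SEP m).card = (SEP m').card := by subst h; rfl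

/-- fiber for `1 ≤ j < n` -/
lemma card_fiber' (n j : ℕ) (hj : 1 ≤ j) (hjn : j < n) :
    ((SEP n).filter fun σ => Bplus σ = j).card
      = ((SEP j).filter fun α => Bplus α = j).card * (SEP (n - j)).card := by
  rw [card_cast n (j + (n - j)) (by omega) j]
  exact card_fiber j (n - j) hj (by omega)

/-- partition of `SEP n` by the value of `Bplus` -/
lemma card_partition (hn : 1 ≤ n) :
    (SEP n).card = ∑ j ∈ Finset.Icc 1 n, ((SEP n).filter fun σ => Bplus σ = j).card := by
  apply Finset.card_eq_sum_card_fiberwise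
  intro σ _
  rw [Finset.mem_coe, Finset.mem_Icc]
  exact ⟨(bplus_setmem σ hn).1, bplus_le σ hn⟩

/-- complement bijection for skew-indecomposables -/
lemma card_bminus (n : ℕ) :
    ((SEP n).filter fun σ => Bminus σ = n).card
      = ((SEP n).filter fun σ => Bplus σ = n).card := by
  apply Finset.card_bij (fun σ _ => cmpl σ)
  · intro σ hσ
    rw [Finset.mem_filter] at hσ ⊢
    obtain ⟨h1, h2⟩ := hσ
    refine ⟨mem_SEP.mpr ((separable_cmpl σ).mpr (mem_SEP.mp h1)), ?_⟩
    rw [← bminus_def', h2]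
  · intro σ1 _ σ2 _ h
    have := congrArg cmpl h
    rwa [cmpl_cmpl, cmpl_cmpl] at this
  · intro τ hτ
    rw [Finset.mem_filter] at hτ
    obtain ⟨h1, h2⟩ := hτ
    refine ⟨cmpl τ, ?_, cmpl_cmpl τ⟩
    rw [Finset.mem_filter]
    refine ⟨mem_SEP.mpr ((separable_cmpl τ).mpr (mem_SEP.mp h1)), ?_⟩
    rw [bminus_def', cmpl_cmpl]
    exact h2

/-- a permutation cannot be both ⊕- and ⊖-decomposable -/
lemma not_both (hn : 2 ≤ n) (σ : Equiv.Perm (Fin n))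
    (hp : Bplus σ < n) (hm : Bminus σ < n) : False := by
  obtain ⟨hj1, hjP⟩ := bplus_setmem σ (by omega)
  obtain ⟨hk1, hkT⟩ := bminus_setmem σ (by omega)
  set j := Bplus σ
  set k := Bminus σ
  have h0n : (0 : ℕ) < n := by omega
  have h0j := hjP ⟨0, h0n⟩ (by show (0:ℕ) < j; omega)
  have h0k := hkT ⟨0, h0n⟩ (by show (0:ℕ) < k; omega)
  have hnk : n - k < j := by omega
  have hle := Finset.card_le_card_of_injOn σ
    (s := Finset.univ.filter (fun i : Fin n => (i : ℕ) < min j k))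
    (t := Finset.univ.filter (fun v : Fin n => n - k ≤ (v : ℕ) ∧ (v : ℕ) < j))
    (by
      intro i hi
      rw [Finset.mem_coe, Finset.mem_filter] at hi ⊢
      refine ⟨Finset.mem_univ _, hkT i (by omega), hjP i (by omega)⟩)
    (fun x _ y _ h => σ.injective h)
  rw [card_filter_lt, card_filter_window n (n - k) j (by omega)] at hle
  omega

/-- dichotomy: separable permutations of length ≥ 2 decompose -/
lemma bp_or_bm (hn : 2 ≤ n) {σ : Equiv.Perm (Fin n)} (hsep : Separable σ) :
    Bplus σ < n ∨ Bminus σ < n := by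
  by_contra h
  push_neg at h
  obtain ⟨h1, h2⟩ := h
  have hplus : ∀ j, 1 ≤ j → j ≤ n - 1 → ¬ PClosed σ j := by
    intro j hj1 hjn hP
    have := bplus_le_of hj1 hP
    omega
  have hminus : ∀ j, 1 ≤ j → j ≤ n - 1 → ¬ TClosed σ j := by
    intro j hj1 hjn hT
    have := bminus_le_of hj1 hT
    omega
  rcases exists_pattern hn σ hplus hminus with hc | hc
  · exact hsep.1 hc
  · exact hsep.2 hc

/-- `sₙ = 2 aₙ` for `n ≥ 2` -/
lemma two_A (hn : 2 ≤ n) :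
    (SEP n).card = 2 * ((SEP n).filter fun σ => Bplus σ = n).card := by
  have hsplit := Finset.card_filter_add_card_filter_not
    (s := SEP n) (p := fun σ => Bplus σ = n)
  have heq : (SEP n).filter (fun σ => ¬ Bplus σ = n)
      = (SEP n).filter (fun σ => Bminus σ = n) := by
    ext σ
    rw [Finset.mem_filter, Finset.mem_filter]
    constructor
    · rintro ⟨h1, h2⟩
      refine ⟨h1, ?_⟩
      have hlt : Bplus σ < n := lt_of_le_of_ne (bplus_le σ (by omega)) h2
      have hbm := bminus_le σ (by omega : 1 ≤ n)
      rcases lt_or_eq_of_le hbm with h | h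
      · exact absurd (not_both hn σ hlt h) (by simp)
      · exact h
    · rintro ⟨h1, h2⟩
      refine ⟨h1, ?_⟩
      intro hB
      rcases bp_or_bm hn (mem_SEP.mp h1) with h | h
      · omega
      · omega
  rw [heq, card_bminus] at hsplit
  omega

-- ### final assembly

lemma main_recursion : ∀ n : ℕ, 2 ≤ n →
    ((SEP n).card : ℝ) =
      ((SEP 1).card : ℝ) * ((SEP (n - 1)).card : ℝ) +
      (1 / 2) * ∑ j ∈ Finset.Icc 2 (n - 1), ((SEP j).card : ℝ) * ((SEP (n - j)).card : ℝ) +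
      (1 / 2) * ((SEP n).card : ℝ) := by
  intro n hn
  have h1 : Finset.Icc 1 n = insert n (Finset.Icc 1 (n - 1)) := by
    ext x
    simp only [Finset.mem_Icc, Finset.mem_insert]
    omega
  have h2 : Finset.Icc 1 (n - 1) = insert 1 (Finset.Icc 2 (n - 1)) := by
    ext x
    simp only [Finset.mem_Icc, Finset.mem_insert]
    omega
  have hnot1 : n ∉ Finset.Icc 1 (n - 1) := by
    rw [Finset.mem_Icc]
    omega
  have hnot2 : (1 : ℕ) ∉ Finset.Icc 2 (n - 1) := by
    rw [Finset.mem_Icc]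
    omega
  have hpart := card_partition (n := n) (by omega)
  rw [h1, Finset.sum_insert hnot1, h2, Finset.sum_insert hnot2] at hpart
  have hA1 : ((SEP n).filter fun σ => Bplus σ = 1).card = (SEP (n - 1)).card := by
    rw [card_fiber' n 1 le_rfl (by omega), A_one, one_mul]
  rw [hA1] at hpart
  have hmid : ∑ j ∈ Finset.Icc 2 (n - 1), ((SEP n).filter fun σ => Bplus σ = j).card
      = ∑ j ∈ Finset.Icc 2 (n - 1),
          ((SEP j).filter fun α => Bplus α = j).card * (SEP (n - j)).card := by
    apply Finset.sum_congr rfl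
    intro j hj
    rw [Finset.mem_Icc] at hj
    exact card_fiber' n j (by omega) (by omega)
  rw [hmid] at hpart
  -- now cast to ℝ
  have hfinal := congrArg (Nat.cast : ℕ → ℝ) hpart
  push_cast at hfinal
  have h2An := two_A (n := n) hn
  have h2AnR : ((SEP n).card : ℝ)
      = 2 * (((SEP n).filter fun σ => Bplus σ = n).card : ℝ) := by
    exact_mod_cast congrArg (Nat.cast : ℕ → ℝ) h2An
  have hsum : ∑ j ∈ Finset.Icc 2 (n - 1), ((SEP j).card : ℝ) * ((SEP (n - j)).card : ℝ)
      = 2 * ∑ j ∈ Finset.Icc 2 (n - 1),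
          ((((SEP j).filter fun σ => Bplus σ = j).card : ℝ) * ((SEP (n - j)).card : ℝ)) := by
    rw [Finset.mul_sum]
    apply Finset.sum_congr rfl
    intro j hj
    rw [Finset.mem_Icc] at hj
    have h2Aj := two_A (n := j) (by omega)
    have h2AjR : ((SEP j).card : ℝ)
        = 2 * (((SEP j).filter fun σ => Bplus σ = j).card : ℝ) := by
      exact_mod_cast congrArg (Nat.cast : ℕ → ℝ) h2Aj
    rw [h2AjR]
    ring
  rw [sep_one_card, hsum]
  push_cast
  linarith [hfinal, h2AnR]

end SepAuxiliary

/-- The recursion `sₙ = s₁ sₙ₋₁ + (1/2) ∑_{j=2}^{n-1} sⱼ sₙ₋ⱼ + (1/2) sₙ` for the number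
`sₙ = |SEP(n)|` of separable permutations, with `s₁ = 1`. -/
theorem sep_card_recursion :
    (SEP 1).card = 1 ∧
    ∀ n : ℕ, 2 ≤ n →
      ((SEP n).card : ℝ) =
        ((SEP 1).card : ℝ) * ((SEP (n - 1)).card : ℝ) +
        (1 / 2) * ∑ j ∈ Finset.Icc 2 (n - 1), ((SEP j).card : ℝ) * ((SEP (n - j)).card : ℝ) +
        (1 / 2) * ((SEP n).card : ℝ) := by
  constructor
  · exact sep_one_card
  · exact main_recursion
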